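/- arXiv:1905.03667 — 2 statements merged into one kernel-verified Lean document; each statement's English description precedes it below -/
import Mathlib

section
/- Let R > 0 and 0 < m₀ ≤ ζ. If φ₁ and φ₂ both belong to C¹([0,R]) ∩ C²((0,R)) and both satisfy (1/r)(r φ'(r))' − φ(r)/r² + (m₀ − ζ) φ(r) = m₀ r on (0,R) with φ(0) = 0 and φ(R) = 0, then φ₁ = φ₂ on [0,R]. -/
open Set Filter Topology

/-- Maximum principle for the homogeneous equation: a function satisfying the
homogeneous ODE with nonpositive zeroth-order coefficient and zero boundary values
is nonpositive. -/
lemma bifCond1_aux (R ζ m₀ : ℝ) (hR : 0 < R) (hmζ : m₀ ≤ ζ)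
    (ψ : ℝ → ℝ)
    (hc : ContinuousOn ψ (Set.Icc 0 R))
    (hd1 : ∀ r ∈ Set.Ioo (0:ℝ) R, DifferentiableAt ℝ ψ r)
    (hd2 : ∀ r ∈ Set.Ioo (0:ℝ) R, DifferentiableAt ℝ (deriv ψ) r)
    (hode : ∀ r ∈ Set.Ioo (0:ℝ) R,
      deriv (fun s => s * deriv ψ s) r / r - ψ r / r^2 + (m₀ - ζ) * ψ r = 0)
    (h0 : ψ 0 = 0) (hRe : ψ R = 0) :
    ∀ r ∈ Set.Icc (0:ℝ) R, ψ r ≤ 0 := by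
  by_contra hcon
  push_neg at hcon
  obtain ⟨r₁, hr₁, hpos⟩ := hcon
  -- max of ψ on the compact interval
  obtain ⟨r₀, hr₀mem, hr₀max⟩ :=
    (isCompact_Icc : IsCompact (Set.Icc (0:ℝ) R)).exists_isMaxOn
      (Set.nonempty_Icc.2 hR.le) hc
  have hψr₀ : 0 < ψ r₀ := lt_of_lt_of_le hpos (hr₀max hr₁)
  -- r₀ is interior
  have hr₀0 : r₀ ≠ 0 := by rintro rfl; rw [h0] at hψr₀; exact lt_irrefl 0 hψr₀
  have hr₀R : r₀ ≠ R := by rintro rfl; rw [hRe] at hψr₀; exact lt_irrefl 0 hψr₀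
  have hr₀ : r₀ ∈ Set.Ioo (0:ℝ) R :=
    ⟨lt_of_le_of_ne hr₀mem.1 (Ne.symm hr₀0), lt_of_le_of_ne hr₀mem.2 hr₀R⟩
  have hnhds : Set.Icc (0:ℝ) R ∈ 𝓝 r₀ :=
    mem_of_superset (isOpen_Ioo.mem_nhds hr₀) Set.Ioo_subset_Icc_self
  have hlocmax : IsLocalMax ψ r₀ := hr₀max.isLocalMax hnhds
  -- first derivative vanishes at r₀
  have hderiv0 : deriv ψ r₀ = 0 := hlocmax.deriv_eq_zero
  -- compute deriv (fun s => s * deriv ψ s) r₀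
  have hprod : HasDerivAt (fun s => s * deriv ψ s)
      (1 * deriv ψ r₀ + r₀ * deriv (deriv ψ) r₀) r₀ :=
    (hasDerivAt_id r₀).mul ((hd2 r₀ hr₀).hasDerivAt)
  have hprodderiv : deriv (fun s => s * deriv ψ s) r₀ = r₀ * deriv (deriv ψ) r₀ := by
    rw [hprod.deriv, hderiv0]; ring
  -- from the ODE, the second derivative at r₀ is positive
  have hode₀ := hode r₀ hr₀
  rw [hprodderiv] at hode₀
  have hr₀pos : (0:ℝ) < r₀ := hr₀.1
  have hD : 0 < deriv (deriv ψ) r₀ := by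
    have hval : deriv (deriv ψ) r₀ = ψ r₀ / r₀^2 + (ζ - m₀) * ψ r₀ := by
      field_simp at hode₀ ⊢
      nlinarith [hode₀]
    rw [hval]
    have h1 : 0 < ψ r₀ / r₀^2 := div_pos hψr₀ (by positivity)
    have h2 : 0 ≤ (ζ - m₀) * ψ r₀ := mul_nonneg (by linarith) hψr₀.le
    linarith
  -- hence deriv ψ is positive just to the right of r₀
  have hslope : Tendsto (slope (deriv ψ) r₀) (𝓝[≠] r₀) (𝓝 (deriv (deriv ψ) r₀)) :=
    hasDerivAt_iff_tendsto_slope.1 (hd2 r₀ hr₀).hasDerivAt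
  have hev : ∀ᶠ s in 𝓝[≠] r₀, 0 < slope (deriv ψ) r₀ s :=
    hslope.eventually (eventually_gt_nhds hD)
  have hev' : ∀ᶠ s in 𝓝[>] r₀, 0 < deriv ψ s := by
    filter_upwards [nhdsWithin_mono r₀ (fun x (hx : x ∈ Set.Ioi r₀) =>
        (ne_of_gt hx : x ≠ r₀)) hev, self_mem_nhdsWithin] with s hs hs'
    have hslt : r₀ < s := hs'
    have : 0 < (deriv ψ s - deriv ψ r₀) / (s - r₀) := by
      simpa [slope_def_field, div_eq_iff, sub_ne_zero] using hs
    rw [hderiv0, sub_zero] at this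
    have hden : 0 < s - r₀ := by linarith
    rcases div_pos_iff.1 this with ⟨h, _⟩ | ⟨_, h⟩
    · exact h
    · linarith
  -- extract an interval (r₀, b) on which deriv ψ > 0
  obtain ⟨b, hb, hbsub⟩ := mem_nhdsGT_iff_exists_Ioo_subset.1 hev'
  have hbr₀ : r₀ < b := hb
  set c := min b R with hc_def
  have hr₀c : r₀ < c := lt_min hbr₀ hr₀.2
  have hcR : c ≤ R := min_le_right _ _
  -- ψ is strictly monotone on [r₀, c]
  have hsub : Set.Icc r₀ c ⊆ Set.Icc 0 R :=
    Set.Icc_subset_Icc hr₀mem.1 hcR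
  have hmono : StrictMonoOn ψ (Set.Icc r₀ c) := by
    apply strictMonoOn_of_deriv_pos (convex_Icc r₀ c) (hc.mono hsub)
    intro x hx
    rw [interior_Icc] at hx
    exact hbsub ⟨hx.1, lt_of_lt_of_le hx.2 (min_le_left _ _)⟩
  set t := (r₀ + c) / 2 with ht_def
  have htmem : t ∈ Set.Icc r₀ c := ⟨by simp [ht_def]; linarith, by simp [ht_def]; linarith⟩
  have ht : ψ r₀ < ψ t :=
    hmono ⟨le_refl r₀, hr₀c.le⟩ htmem (by simp [ht_def]; linarith)
  have : ψ t ≤ ψ r₀ := hr₀max (hsub htmem)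
  linarith

/-- Let `R > 0` and `0 < m₀ ≤ ζ`. If `φ₁` and `φ₂` both belong to
`C¹([0,R]) ∩ C²((0,R))` and both satisfy
`(1/r)(r φ'(r))' − φ(r)/r² + (m₀ − ζ) φ(r) = m₀ r` on `(0,R)` with `φ(0) = 0` and `φ(R) = 0`,
then `φ₁ = φ₂` on `[0,R]`. -/
theorem bifCond1_uniqueness
    (R ζ m₀ : ℝ) (hR : 0 < R) (hm₀ : 0 < m₀) (hmζ : m₀ ≤ ζ)
    (φ₁ φ₂ : ℝ → ℝ)
    (h11 : ContDiffOn ℝ 1 φ₁ (Set.Icc 0 R)) (h12 : ContDiffOn ℝ 2 φ₁ (Set.Ioo 0 R))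
    (h21 : ContDiffOn ℝ 1 φ₂ (Set.Icc 0 R)) (h22 : ContDiffOn ℝ 2 φ₂ (Set.Ioo 0 R))
    (hode1 : ∀ r ∈ Set.Ioo (0:ℝ) R,
      deriv (fun s => s * deriv φ₁ s) r / r - φ₁ r / r^2 + (m₀ - ζ) * φ₁ r = m₀ * r)
    (hode2 : ∀ r ∈ Set.Ioo (0:ℝ) R,
      deriv (fun s => s * deriv φ₂ s) r / r - φ₂ r / r^2 + (m₀ - ζ) * φ₂ r = m₀ * r)
    (h10 : φ₁ 0 = 0) (h1R : φ₁ R = 0) (h20 : φ₂ 0 = 0) (h2R : φ₂ R = 0) :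
    ∀ r ∈ Set.Icc (0:ℝ) R, φ₁ r = φ₂ r := by
  -- differentiability facts
  have key : ∀ (f g : ℝ → ℝ),
      ContDiffOn ℝ 1 f (Set.Icc 0 R) → ContDiffOn ℝ 2 f (Set.Ioo 0 R) →
      ContDiffOn ℝ 1 g (Set.Icc 0 R) → ContDiffOn ℝ 2 g (Set.Ioo 0 R) →
      (∀ r ∈ Set.Ioo (0:ℝ) R,
        deriv (fun s => s * deriv f s) r / r - f r / r^2 + (m₀ - ζ) * f r = m₀ * r) →
      (∀ r ∈ Set.Ioo (0:ℝ) R,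
        deriv (fun s => s * deriv g s) r / r - g r / r^2 + (m₀ - ζ) * g r = m₀ * r) →
      f 0 = 0 → f R = 0 → g 0 = 0 → g R = 0 →
      ∀ r ∈ Set.Icc (0:ℝ) R, f r - g r ≤ 0 := by
    intro f g hf1 hf2 hg1 hg2 hof hog hf0 hfR hg0 hgR
    set ψ := fun r => f r - g r with hψ_def
    have hfd1 : ∀ r ∈ Set.Ioo (0:ℝ) R, DifferentiableAt ℝ f r := fun r hr =>
      (hf2.differentiableOn (by norm_num)).differentiableAt (isOpen_Ioo.mem_nhds hr)
    have hgd1 : ∀ r ∈ Set.Ioo (0:ℝ) R, DifferentiableAt ℝ g r := fun r hr =>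
      (hg2.differentiableOn (by norm_num)).differentiableAt (isOpen_Ioo.mem_nhds hr)
    have hfd2 : ∀ r ∈ Set.Ioo (0:ℝ) R, DifferentiableAt ℝ (deriv f) r := fun r hr =>
      (((hf2.deriv_of_isOpen (m := 1) isOpen_Ioo (by norm_num)).differentiableOn
        one_ne_zero).differentiableAt (isOpen_Ioo.mem_nhds hr))
    have hgd2 : ∀ r ∈ Set.Ioo (0:ℝ) R, DifferentiableAt ℝ (deriv g) r := fun r hr =>
      (((hg2.deriv_of_isOpen (m := 1) isOpen_Ioo (by norm_num)).differentiableOn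
        one_ne_zero).differentiableAt (isOpen_Ioo.mem_nhds hr))
    have hψc : ContinuousOn ψ (Set.Icc 0 R) :=
      (hf1.continuousOn).sub (hg1.continuousOn)
    have hψd1 : ∀ r ∈ Set.Ioo (0:ℝ) R, DifferentiableAt ℝ ψ r := fun r hr =>
      (hfd1 r hr).sub (hgd1 r hr)
    -- deriv ψ = deriv f - deriv g on Ioo
    have hψderiv : ∀ r ∈ Set.Ioo (0:ℝ) R, deriv ψ r = deriv f r - deriv g r := fun r hr =>
      deriv_sub (hfd1 r hr) (hgd1 r hr)
    have hψd2 : ∀ r ∈ Set.Ioo (0:ℝ) R, DifferentiableAt ℝ (deriv ψ) r := by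
      intro r hr
      have hev : deriv ψ =ᶠ[𝓝 r] fun s => deriv f s - deriv g s := by
        filter_upwards [isOpen_Ioo.mem_nhds hr] with s hs using hψderiv s hs
      exact (((hfd2 r hr).sub (hgd2 r hr)).congr_of_eventuallyEq hev)
    have hψode : ∀ r ∈ Set.Ioo (0:ℝ) R,
        deriv (fun s => s * deriv ψ s) r / r - ψ r / r^2 + (m₀ - ζ) * ψ r = 0 := by
      intro r hr
      have hev : (fun s => s * deriv ψ s)
          =ᶠ[𝓝 r] fun s => s * deriv f s - s * deriv g s := by
        filter_upwards [isOpen_Ioo.mem_nhds hr] with s hs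
        rw [hψderiv s hs]; ring
      have hdf : DifferentiableAt ℝ (fun s => s * deriv f s) r :=
        (differentiableAt_fun_id).mul (hfd2 r hr)
      have hdg : DifferentiableAt ℝ (fun s => s * deriv g s) r :=
        (differentiableAt_fun_id).mul (hgd2 r hr)
      have hD : deriv (fun s => s * deriv ψ s) r =
          deriv (fun s => s * deriv f s) r - deriv (fun s => s * deriv g s) r := by
        rw [hev.deriv_eq, deriv_fun_sub hdf hdg]
      have h1 := hof r hr
      have h2 := hog r hr
      have hrne : r ≠ 0 := ne_of_gt hr.1
      rw [hD]
      simp only [hψ_def]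
      field_simp at h1 h2 ⊢
      nlinarith [h1, h2]
    have hψ0 : ψ 0 = 0 := by simp [hψ_def, hf0, hg0]
    have hψR : ψ R = 0 := by simp [hψ_def, hfR, hgR]
    exact bifCond1_aux R ζ m₀ hR hmζ ψ hψc hψd1 hψd2 hψode hψ0 hψR
  intro r hr
  have h1 := key φ₁ φ₂ h11 h12 h21 h22 hode1 hode2 h10 h1R h20 h2R r hr
  have h2 := key φ₂ φ₁ h21 h22 h11 h12 hode2 hode1 h20 h2R h10 h1R r hr
  linarith
end

section
/- Let R > 0 and ζ > 0. For every w ∈ C¹(B̄_R;ℝ) with ∫_{B_R} w dxdy = 0 and w(x) = 1 for every x with |x| = R, one has ∫_{B_R} |∇w|² dxdy + ζ ∫_{B_R} w² dxdy ≥ 2π √ζ R. -/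
open MeasureTheory Metric

noncomputable def E2equiv : EuclideanSpace ℝ (Fin 2) ≃ᵐ ℝ × ℝ :=
  (MeasurableEquiv.toLp 2 (Fin 2 → ℝ)).symm.trans MeasurableEquiv.finTwoArrow

lemma E2equiv_measurePreserving : MeasurePreserving E2equiv volume volume :=
  (volume_preserving_finTwoArrow ℝ).comp (EuclideanSpace.volume_preserving_symm_measurableEquiv_toLp (Fin 2))

lemma E2equiv_symm_apply_zero (p : ℝ × ℝ) : (E2equiv.symm p) 0 = p.1 := by
  rfl

lemma E2equiv_symm_apply_one (p : ℝ × ℝ) : (E2equiv.symm p) 1 = p.2 := by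
  rfl

lemma E2equiv_norm (p : ℝ × ℝ) : ‖E2equiv.symm p‖ = Real.sqrt (p.1^2 + p.2^2) := by
  rw [EuclideanSpace.norm_eq, Fin.sum_univ_two, E2equiv_symm_apply_zero, E2equiv_symm_apply_one]
  simp [sq_abs, sq]

lemma E2equiv_smul (r : ℝ) (p : ℝ × ℝ) :
    E2equiv.symm (r * p.1, r * p.2) = r • E2equiv.symm p := by
  have h0 := E2equiv_symm_apply_zero ; have h1 := E2equiv_symm_apply_one
  ext i
  fin_cases i
  · show E2equiv.symm (r * p.1, r * p.2) 0 = (r • E2equiv.symm p) 0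
    rw [h0]; simp [h0]
  · show E2equiv.symm (r * p.1, r * p.2) 1 = (r • E2equiv.symm p) 1
    rw [h1]; simp [h1]

lemma E2equiv_symm_eq (p : ℝ × ℝ) :
    E2equiv.symm p = (EuclideanSpace.equiv (Fin 2) ℝ).symm ![p.1, p.2] := by
  ext i
  fin_cases i
  · show E2equiv.symm p 0 = _
    rw [E2equiv_symm_apply_zero]; simp [EuclideanSpace.equiv]
  · show E2equiv.symm p 1 = _
    rw [E2equiv_symm_apply_one]; simp [EuclideanSpace.equiv]

lemma E2equiv_symm_continuous : Continuous (fun p : ℝ × ℝ => E2equiv.symm p) := by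
  have : (fun p : ℝ × ℝ => E2equiv.symm p)
      = fun p : ℝ × ℝ => (EuclideanSpace.equiv (Fin 2) ℝ).symm ![p.1, p.2] := by
    funext p; exact E2equiv_symm_eq p
  rw [this]
  apply (EuclideanSpace.equiv (Fin 2) ℝ).symm.continuous.comp
  apply continuous_pi
  intro i
  fin_cases i
  · exact continuous_fst
  · exact continuous_snd

lemma vol_ball_E2 (R : ℝ) (hR : 0 < R) :
    (volume (ball (0 : EuclideanSpace ℝ (Fin 2)) R)).toReal = Real.pi * R^2 := by
  rw [EuclideanSpace.volume_ball]
  rw [Fintype.card_fin]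
  have hg : Real.Gamma ((2:ℕ)/2 + 1 : ℝ) = 1 := by
    norm_num [Real.Gamma_two]
  rw [hg, Real.sq_sqrt Real.pi_nonneg, div_one, ← ENNReal.ofReal_pow hR.le,
    ← ENNReal.ofReal_mul (by positivity)]
  rw [ENNReal.toReal_ofReal (by positivity)]
  ring


lemma g_key {ζ r : ℝ} (hζ : 0 < ζ) (hr : 0 ≤ r) :
    ζ*r/(Real.sqrt ζ*r+2) + r * (2*ζ/(Real.sqrt ζ*r+2)^2)
      + r * (ζ*r/(Real.sqrt ζ*r+2))^2 ≤ ζ * r := by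
  set t := Real.sqrt ζ with ht
  have ht0 : 0 < t := Real.sqrt_pos.mpr hζ
  have ht2 : t^2 = ζ := Real.sq_sqrt hζ.le
  have hD : 0 < t*r+2 := by nlinarith
  have key : ζ*r/(t*r+2) + r * (2*ζ/(t*r+2)^2) + r * (ζ*r/(t*r+2))^2
      = (ζ*r*((t*r+2) + 2 + ζ*r^2))/((t*r+2)^2) := by
    field_simp
  rw [key, div_le_iff₀ (by positivity)]
  have h1 : 0 ≤ ζ * r := by positivity
  have hexp : ζ*r*(t*r+2)^2 - ζ*r*(t*r+2+2+ζ*r^2) = 3*(ζ*r)*(t*r) := by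
    rw [← ht2]; ring
  nlinarith [mul_nonneg h1 (mul_nonneg ht0.le hr)]

set_option maxHeartbeats 1000000 in
lemma ray_bound (R ζ : ℝ) (hR : 0 < R) (hζ : 0 < ζ)
    (w : EuclideanSpace ℝ (Fin 2) → ℝ)
    (hw : ContDiffOn ℝ 1 w (closedBall 0 R))
    (hbdry : ∀ x : EuclideanSpace ℝ (Fin 2), ‖x‖ = R → w x = 1)
    (μ : ℝ) (u : EuclideanSpace ℝ (Fin 2)) (hu : ‖u‖ = 1) :
    R * (ζ*R/(Real.sqrt ζ*R+2)) * (1 - μ)^2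
      ≤ ∫ r in Set.Ioo (0:ℝ) R, r * (‖gradient w (r • u)‖^2 + ζ * (w (r • u) - μ)^2) := by
  have ht0 : 0 < Real.sqrt ζ := Real.sqrt_pos.mpr hζ
  set t := Real.sqrt ζ with htdef
  have hD : ∀ r : ℝ, 0 ≤ r → 0 < t*r+2 := fun r hr => by nlinarith
  have hnorm_smul : ∀ r : ℝ, 0 ≤ r → ‖r • u‖ = r := fun r hr => by
    rw [norm_smul, hu, mul_one, Real.norm_eq_abs, abs_of_nonneg hr]
  have hsub : ∀ r ∈ Set.Icc (0:ℝ) R, r • u ∈ closedBall (0 : EuclideanSpace ℝ (Fin 2)) R := by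
    intro r hr
    rw [mem_closedBall, dist_zero_right, hnorm_smul r hr.1]
    exact hr.2
  have hmemball : ∀ r : ℝ, 0 ≤ r → r < R → r • u ∈ ball (0 : EuclideanSpace ℝ (Fin 2)) R := by
    intro r hr0 hrR
    rw [mem_ball, dist_zero_right, hnorm_smul r hr0]
    exact hrR
  have hnhds : ∀ x ∈ ball (0 : EuclideanSpace ℝ (Fin 2)) R,
      closedBall (0 : EuclideanSpace ℝ (Fin 2)) R ∈ nhds x := fun x hx =>
    mem_nhds_iff.mpr ⟨ball 0 R, ball_subset_closedBall, isOpen_ball, hx⟩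
  have hUD : UniqueDiffOn ℝ (closedBall (0 : EuclideanSpace ℝ (Fin 2)) R) := by
    apply uniqueDiffOn_convex (convex_closedBall _ _)
    rw [interior_closedBall _ hR.ne']
    exact ⟨0, mem_ball_self hR⟩
  have hfc : ContinuousOn (fderivWithin ℝ w (closedBall (0 : EuclideanSpace ℝ (Fin 2)) R))
      (closedBall 0 R) := hw.continuousOn_fderivWithin hUD le_rfl
  obtain ⟨M, hM⟩ :=
    (isCompact_closedBall (0 : EuclideanSpace ℝ (Fin 2)) R).exists_bound_of_continuousOn hfc
  obtain ⟨K, hK⟩ :=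
    (isCompact_closedBall (0 : EuclideanSpace ℝ (Fin 2)) R).exists_bound_of_continuousOn
      hw.continuousOn
  have hM0 : 0 ≤ M := le_trans (norm_nonneg _) (hM 0 (mem_closedBall_self hR.le))
  have hfeq : ∀ x ∈ ball (0 : EuclideanSpace ℝ (Fin 2)) R,
      fderiv ℝ w x = fderivWithin ℝ w (closedBall 0 R) x := fun x hx =>
    (fderivWithin_of_mem_nhds (hnhds x hx)).symm
  have hdiff : ∀ x ∈ ball (0 : EuclideanSpace ℝ (Fin 2)) R, DifferentiableAt ℝ w x := fun x hx =>
    (hw.differentiableOn one_ne_zero).differentiableAt (hnhds x hx)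
  have hgradnorm : ∀ x, ‖gradient w x‖ = ‖fderiv ℝ w x‖ := fun x =>
    LinearIsometryEquiv.norm_map _ _
  have hdle : ∀ x, |fderiv ℝ w x u| ≤ ‖fderiv ℝ w x‖ := by
    intro x
    have := (fderiv ℝ w x).le_opNorm u
    rw [hu, mul_one, Real.norm_eq_abs] at this
    exact this
  -- the functions
  set g : ℝ → ℝ := fun r => ζ*r/(t*r+2) with hgdef
  set g' : ℝ → ℝ := fun r => 2*ζ/(t*r+2)^2 with hg'def
  set φ : ℝ → ℝ := fun r => w (r • u) - μ with hφdef
  set d : ℝ → ℝ := fun r => fderiv ℝ w (r • u) u with hddef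
  set h : ℝ → ℝ := fun r => r * g r * (φ r)^2 with hhdef
  set h' : ℝ → ℝ := fun r => (g r + r * g' r) * (φ r)^2 + 2*(r * g r * φ r) * d r with hh'def
  set ψ : ℝ → ℝ := fun r => r * (‖gradient w (r • u)‖^2 + ζ * (φ r)^2) with hψdef
  set Q : ℝ := K + |μ| with hQdef
  have hQ : ∀ r ∈ Set.Icc (0:ℝ) R, |φ r| ≤ Q := by
    intro r hr
    have := hK (r • u) (hsub r hr)
    rw [Real.norm_eq_abs] at this
    calc |φ r| ≤ |w (r•u)| + |μ| := abs_sub _ _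
      _ ≤ K + |μ| := by linarith
  have hQ0 : 0 ≤ Q := le_trans (abs_nonneg _) (hQ 0 ⟨le_rfl, hR.le⟩)
  have hdM : ∀ r : ℝ, 0 ≤ r → r < R → |d r| ≤ M := by
    intro r h0 h1
    have hx := hmemball r h0 h1
    show |fderiv ℝ w (r • u) u| ≤ M
    refine (hdle _).trans ?_
    rw [hfeq _ hx]
    exact hM _ (ball_subset_closedBall hx)
  -- bounds on g, g'
  have hg_nonneg : ∀ r : ℝ, 0 ≤ r → 0 ≤ g r := fun r hr =>
    div_nonneg (by positivity) (hD r hr).le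
  have hg_le : ∀ r ∈ Set.Icc (0:ℝ) R, g r ≤ ζ*R/2 := by
    intro r hr
    have h2 := hD r hr.1
    have h3 : ζ * r ≤ ζ * R := by nlinarith [hr.2]
    calc ζ*r/(t*r+2) ≤ ζ*r/2 := by
          apply div_le_div_of_nonneg_left ?_ (by norm_num) ?_ <;>
            nlinarith [hr.1, mul_nonneg ht0.le hr.1]
      _ ≤ ζ*R/2 := by linarith
  have hg'_pos : ∀ r : ℝ, 0 ≤ r → 0 < g' r := by
    intro r hr
    have := hD r hr
    have : (0:ℝ) < (t*r+2)^2 := by positivity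
    exact div_pos (by positivity) this
  have hg'_le : ∀ r ∈ Set.Icc (0:ℝ) R, g' r ≤ ζ/2 := by
    intro r hr
    have h2 := hD r hr.1
    show 2*ζ/(t*r+2)^2 ≤ ζ/2
    rw [div_le_iff₀ (by positivity)]
    nlinarith [mul_nonneg hζ.le (mul_nonneg ht0.le hr.1),
      mul_nonneg hζ.le (sq_nonneg (t*r))]
  -- derivatives
  have hφd : ∀ r ∈ Set.Ioo (0:ℝ) R, HasDerivAt (fun s => w (s • u)) (d r) r := by
    intro r hr
    have hx : r • u ∈ ball (0 : EuclideanSpace ℝ (Fin 2)) R := hmemball r hr.1.le hr.2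
    have h1 : HasFDerivAt w (fderiv ℝ w (r • u)) (r • u) := (hdiff _ hx).hasFDerivAt
    have h2 : HasDerivAt (fun s : ℝ => s • u) u r := by
      simpa using (hasDerivAt_id r).smul_const u
    exact h1.comp_hasDerivAt r h2
  have hgd : ∀ r ∈ Set.Ioo (0:ℝ) R, HasDerivAt g (g' r) r := by
    intro r hr
    have h2 := hD r hr.1.le
    have hc : HasDerivAt (fun s : ℝ => ζ * s) ζ r := by
      simpa using (hasDerivAt_id r).const_mul ζ
    have hden : HasDerivAt (fun s : ℝ => t * s + 2) t r := by
      simpa using ((hasDerivAt_id r).const_mul t).add_const 2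
    have h3 := hc.fun_div hden (by nlinarith)
    refine h3.congr_deriv ?_
    show _ = 2*ζ/(t*r+2)^2
    field_simp
    ring
  have hderiv_h : ∀ r ∈ Set.Ioo (0:ℝ) R, HasDerivAt h (h' r) r := by
    intro r hr
    have h1 := ((hasDerivAt_id r).mul (hgd r hr)).mul (((hφd r hr).sub_const μ).pow 2)
    refine h1.congr_deriv ?_
    simp only [hh'def, hφdef, hddef, Pi.mul_apply, Pi.pow_apply, id_eq, pow_one, Nat.cast_ofNat]
    ring
  -- continuity
  have hcont_ray : Continuous (fun r : ℝ => r • u) := continuous_id.smul continuous_const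
  have hcontφ : ContinuousOn φ (Set.Icc (0:ℝ) R) := by
    apply ContinuousOn.sub ?_ continuousOn_const
    exact hw.continuousOn.comp hcont_ray.continuousOn (fun r hr => hsub r hr)
  have hcontg : ContinuousOn g (Set.Icc (0:ℝ) R) := by
    apply ContinuousOn.div ((continuous_const.mul continuous_id).continuousOn)
      (((continuous_const.mul continuous_id).add continuous_const).continuousOn)
    intro r hr
    exact (hD r hr.1).ne'
  have hcontg' : ContinuousOn g' (Set.Icc (0:ℝ) R) := by
    apply ContinuousOn.div continuousOn_const
      ((((continuous_const.mul continuous_id).add continuous_const).pow 2).continuousOn)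
    intro r hr
    exact pow_ne_zero _ (hD r hr.1).ne'
  have hcont_h : ContinuousOn h (Set.Icc (0:ℝ) R) :=
    (continuousOn_id.mul hcontg).mul (hcontφ.pow 2)
  have hcontfd : ContinuousOn (fun r : ℝ => fderiv ℝ w (r • u)) (Set.Ioo (0:ℝ) R) := by
    have hmap : ∀ r ∈ Set.Ioo (0:ℝ) R, r • u ∈ ball (0 : EuclideanSpace ℝ (Fin 2)) R :=
      fun r hr => hmemball r hr.1.le hr.2
    have hc1 : ContinuousOn (fun r : ℝ => fderivWithin ℝ w (closedBall 0 R) (r • u))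
        (Set.Ioo (0:ℝ) R) :=
      hfc.comp hcont_ray.continuousOn (fun r hr => ball_subset_closedBall (hmap r hr))
    exact hc1.congr (fun r hr => hfeq _ (hmap r hr))
  have hcontd : ContinuousOn d (Set.Ioo (0:ℝ) R) :=
    (ContinuousLinearMap.apply ℝ ℝ u).continuous.comp_continuousOn hcontfd
  have hIccIoo : Set.Ioo (0:ℝ) R ⊆ Set.Icc 0 R := Set.Ioo_subset_Icc_self
  have hcont_h' : ContinuousOn h' (Set.Ioo (0:ℝ) R) := by
    apply ContinuousOn.add
    · exact ((hcontg.mono hIccIoo).add (continuousOn_id.mul (hcontg'.mono hIccIoo))).mul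
        ((hcontφ.mono hIccIoo).pow 2)
    · exact ((continuousOn_const.mul ((continuousOn_id.mul (hcontg.mono hIccIoo)).mul
        (hcontφ.mono hIccIoo))).mul hcontd)
  have hcontgrad : ContinuousOn (fun r : ℝ => ‖gradient w (r • u)‖) (Set.Ioo (0:ℝ) R) := by
    apply hcontfd.norm.congr
    intro r hr
    show ‖gradient w (r • u)‖ = ‖fderiv ℝ w (r • u)‖
    exact hgradnorm _
  have hcontψ : ContinuousOn ψ (Set.Ioo (0:ℝ) R) :=
    continuousOn_id.mul ((hcontgrad.pow 2).add (continuousOn_const.mul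
      ((hcontφ.mono hIccIoo).pow 2)))
  -- bounds
  have hbound_h' : ∀ r ∈ Set.Ioo (0:ℝ) R, ‖h' r‖ ≤ ζ*R*Q^2 + ζ*R^2*Q*M := by
    intro r hr
    have hr1 : r ∈ Set.Icc (0:ℝ) R := hIccIoo hr
    have hga := hg_nonneg r hr1.1
    have hgb := hg_le r hr1
    have hg1 := (hg'_pos r hr1.1).le
    have hg2 := hg'_le r hr1
    have hphi := hQ r hr1
    have hdr := hdM r hr.1.le hr.2
    have hphi0 := abs_nonneg (φ r)
    have hdr0 := abs_nonneg (d r)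
    have hφ2 : (φ r)^2 ≤ Q^2 := by nlinarith [sq_abs (φ r)]
    rw [Real.norm_eq_abs]
    have e1 : g r + r * g' r ≤ ζ * R := by nlinarith [hg1, hg2, hgb, hr1.1, hr1.2]
    have e2 : 0 ≤ g r + r * g' r := by nlinarith [hga, mul_nonneg hr1.1 hg1]
    have hA : |(g r + r * g' r) * (φ r)^2| ≤ ζ*R*Q^2 := by
      rw [abs_of_nonneg (mul_nonneg e2 (sq_nonneg _))]
      calc (g r + r * g' r) * (φ r)^2 ≤ (ζ*R) * Q^2 :=
            mul_le_mul e1 hφ2 (sq_nonneg _) (by positivity)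
        _ = ζ*R*Q^2 := by ring
    have hB : |2*(r * g r * φ r) * d r| ≤ ζ*R^2*Q*M := by
      have habs : |2*(r * g r * φ r) * d r| = 2 * (r * g r) * |φ r| * |d r| := by
        rw [abs_mul, abs_mul, abs_mul, abs_mul, abs_two, abs_of_nonneg hr1.1,
          abs_of_nonneg hga]
        ring
      rw [habs]
      have e3 : r * g r ≤ R * (ζ*R/2) := mul_le_mul hr1.2 hgb hga hR.le
      have e4 : r * g r * |φ r| ≤ R * (ζ*R/2) * Q :=
        mul_le_mul e3 hphi hphi0 (by positivity)
      calc 2 * (r * g r) * |φ r| * |d r| = 2 * ((r * g r * |φ r|) * |d r|) := by ring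
        _ ≤ 2 * ((R * (ζ*R/2) * Q) * M) := by
            have e6 := mul_le_mul e4 hdr hdr0 (by positivity : (0:ℝ) ≤ R * (ζ*R/2) * Q)
            linarith
        _ = ζ*R^2*Q*M := by ring
    calc |h' r| ≤ |(g r + r * g' r) * (φ r)^2| + |2*(r * g r * φ r) * d r| := abs_add_le _ _
      _ ≤ ζ*R*Q^2 + ζ*R^2*Q*M := by linarith
  have hgradM : ∀ r : ℝ, 0 ≤ r → r < R → ‖gradient w (r • u)‖ ≤ M := by
    intro r h0 h1
    have hx := hmemball r h0 h1
    rw [hgradnorm, hfeq _ hx]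
    exact hM _ (ball_subset_closedBall hx)
  have hbound_ψ : ∀ r ∈ Set.Ioo (0:ℝ) R, ‖ψ r‖ ≤ R*(M^2 + ζ*Q^2) := by
    intro r hr
    have hr1 : r ∈ Set.Icc (0:ℝ) R := hIccIoo hr
    have h1 := hgradM r hr.1.le hr.2
    have h2 := hQ r hr1
    have hφ2 : (φ r)^2 ≤ Q^2 := by nlinarith [sq_abs (φ r), abs_nonneg (φ r)]
    have hg2 : ‖gradient w (r • u)‖^2 ≤ M^2 := by
      nlinarith [norm_nonneg (gradient w (r • u))]
    rw [Real.norm_eq_abs, abs_of_nonneg (mul_nonneg hr1.1 (by positivity))]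
    have h3 : ‖gradient w (r • u)‖^2 + ζ * (φ r)^2 ≤ M^2 + ζ*Q^2 := by nlinarith
    exact mul_le_mul hr1.2 h3 (by positivity) hR.le
  -- interval integrability
  have hIooIoc : ∀ (f : ℝ → ℝ), ContinuousOn f (Set.Ioo (0:ℝ) R) →
      (∀ r ∈ Set.Ioo (0:ℝ) R, ‖f r‖ ≤ ζ*R*Q^2 + ζ*R^2*Q*M + R*(M^2 + ζ*Q^2)) →
      IntervalIntegrable f volume 0 R := by
    intro f hc hb
    rw [intervalIntegrable_iff, Set.uIoc_of_le hR.le,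
      integrableOn_Ioc_iff_integrableOn_Ioo]
    exact ⟨hc.aestronglyMeasurable measurableSet_Ioo,
      MeasureTheory.HasFiniteIntegral.restrict_of_bounded
        (C := ζ*R*Q^2 + ζ*R^2*Q*M + R*(M^2 + ζ*Q^2))
        (by rw [Real.volume_Ioo]; exact ENNReal.ofReal_lt_top)
        ((MeasureTheory.ae_restrict_iff' measurableSet_Ioo).2 (MeasureTheory.ae_of_all _ hb))⟩
  have hQM1 : 0 ≤ R*(M^2 + ζ*Q^2) := by positivity
  have hQM2 : 0 ≤ ζ*R*Q^2 + ζ*R^2*Q*M := by positivity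
  have hint_h' : IntervalIntegrable h' volume 0 R :=
    hIooIoc h' hcont_h' (fun r hr => (hbound_h' r hr).trans (by linarith))
  have hint_ψ : IntervalIntegrable ψ volume 0 R :=
    hIooIoc ψ hcontψ (fun r hr => (hbound_ψ r hr).trans (by linarith))
  -- FTC
  have hFTC : ∫ r in (0:ℝ)..R, h' r = h R - h 0 :=
    intervalIntegral.integral_eq_sub_of_hasDeriv_right_of_le hR.le hcont_h
      (fun r hr => (hderiv_h r hr).hasDerivWithinAt) hint_h'
  -- pointwise bound h' ≤ ψ on Icc
  have hpt : ∀ r ∈ Set.Icc (0:ℝ) R, h' r ≤ ψ r := by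
    intro r hr
    have hd2 : (d r)^2 ≤ ‖gradient w (r • u)‖^2 := by
      have h1 := hdle (r • u)
      rw [← hgradnorm] at h1
      nlinarith [abs_nonneg (d r), sq_abs (d r), norm_nonneg (gradient w (r • u))]
    have hkey := g_key hζ hr.1 (r := r)
    rw [← htdef] at hkey
    show (g r + r * g' r) * (φ r)^2 + 2*(r * g r * φ r) * d r
      ≤ r * (‖gradient w (r • u)‖^2 + ζ * (φ r)^2)
    have hkey' : g r + r * g' r + r * (g r)^2 ≤ ζ * r := hkey
    nlinarith [mul_nonneg hr.1 (sq_nonneg (d r - g r * φ r)),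
      mul_nonneg (sub_nonneg.mpr hkey') (sq_nonneg (φ r)),
      mul_le_mul_of_nonneg_left hd2 hr.1]
  have hmono : ∫ r in (0:ℝ)..R, h' r ≤ ∫ r in (0:ℝ)..R, ψ r :=
    intervalIntegral.integral_mono_on hR.le hint_h' hint_ψ hpt
  -- endpoints
  have hwR : w (R • u) = 1 := hbdry _ (hnorm_smul R hR.le)
  have hhR : h R = R * (ζ*R/(t*R+2)) * (1-μ)^2 := by
    simp only [hhdef, hφdef, hgdef, hwR]
  have hh0 : h 0 = 0 := by
    simp [hhdef, hgdef]
  have hconv : ∫ r in (0:ℝ)..R, ψ r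
      = ∫ r in Set.Ioo (0:ℝ) R, r * (‖gradient w (r • u)‖^2 + ζ * (w (r • u) - μ)^2) := by
    rw [intervalIntegral.integral_of_le hR.le, MeasureTheory.integral_Ioc_eq_integral_Ioo]
  calc R * (ζ*R/(t*R+2)) * (1-μ)^2 = h R - h 0 := by rw [hhR, hh0, sub_zero]
    _ = ∫ r in (0:ℝ)..R, h' r := hFTC.symm
    _ ≤ ∫ r in (0:ℝ)..R, ψ r := hmono
    _ = _ := hconv

set_option maxHeartbeats 1000000 in
/-- Let `R > 0` and `ζ > 0`. For every `w ∈ C¹(B̄_R;ℝ)` with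
`∫_{B_R} w dxdy = 0` and `w = 1` on the boundary circle `|x| = R`, one has
`∫_{B_R} |∇w|² dxdy + ζ ∫_{B_R} w² dxdy ≥ 2π √ζ R`. -/
theorem constrained_dirichlet_energy_lower_bound
    (R ζ : ℝ) (hR : 0 < R) (hζ : 0 < ζ)
    (w : EuclideanSpace ℝ (Fin 2) → ℝ)
    (hw : ContDiffOn ℝ 1 w (closedBall 0 R))
    (hmean : (∫ x in ball (0 : EuclideanSpace ℝ (Fin 2)) R, w x) = 0)
    (hbdry : ∀ x : EuclideanSpace ℝ (Fin 2), ‖x‖ = R → w x = 1) :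
    2 * Real.pi * Real.sqrt ζ * R
      ≤ (∫ x in ball (0 : EuclideanSpace ℝ (Fin 2)) R, ‖gradient w x‖^2)
          + ζ * ∫ x in ball (0 : EuclideanSpace ℝ (Fin 2)) R, (w x)^2 := by
  have ht0 : 0 < Real.sqrt ζ := Real.sqrt_pos.mpr hζ
  set t := Real.sqrt ζ with htdef
  have hζt : ζ = t^2 := (Real.sq_sqrt hζ.le).symm
  set μ : ℝ := -2/(t*R) with hμdef
  set f : EuclideanSpace ℝ (Fin 2) → ℝ :=
    fun x => ‖gradient w x‖^2 + ζ*(w x - μ)^2 with hfdef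
  set U : ℝ → EuclideanSpace ℝ (Fin 2) :=
    fun θ => E2equiv.symm (Real.cos θ, Real.sin θ) with hUdef
  set P : ℝ × ℝ → ℝ := fun p => p.1 * f (p.1 • U p.2) with hPdef
  set S : Set (ℝ × ℝ) := Set.Ioo (0:ℝ) R ×ˢ Set.Ioo (-Real.pi) Real.pi with hSdef
  have hUnorm : ∀ θ, ‖U θ‖ = 1 := by
    intro θ
    show ‖E2equiv.symm (Real.cos θ, Real.sin θ)‖ = 1
    rw [E2equiv_norm]
    simp [Real.cos_sq_add_sin_sq]
  -- boilerplate about w on the ball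
  have hnhds : ∀ x ∈ ball (0 : EuclideanSpace ℝ (Fin 2)) R,
      closedBall (0 : EuclideanSpace ℝ (Fin 2)) R ∈ nhds x := fun x hx =>
    mem_nhds_iff.mpr ⟨ball 0 R, ball_subset_closedBall, isOpen_ball, hx⟩
  have hUDiff : UniqueDiffOn ℝ (closedBall (0 : EuclideanSpace ℝ (Fin 2)) R) := by
    apply uniqueDiffOn_convex (convex_closedBall _ _)
    rw [interior_closedBall _ hR.ne']
    exact ⟨0, mem_ball_self hR⟩
  have hfc : ContinuousOn (fderivWithin ℝ w (closedBall (0 : EuclideanSpace ℝ (Fin 2)) R))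
      (closedBall 0 R) := hw.continuousOn_fderivWithin hUDiff le_rfl
  obtain ⟨M, hM⟩ :=
    (isCompact_closedBall (0 : EuclideanSpace ℝ (Fin 2)) R).exists_bound_of_continuousOn hfc
  obtain ⟨K, hK⟩ :=
    (isCompact_closedBall (0 : EuclideanSpace ℝ (Fin 2)) R).exists_bound_of_continuousOn
      hw.continuousOn
  have hM0 : 0 ≤ M := le_trans (norm_nonneg _) (hM 0 (mem_closedBall_self hR.le))
  have hK0 : 0 ≤ K := le_trans (norm_nonneg _) (hK 0 (mem_closedBall_self hR.le))
  have hfeq : ∀ x ∈ ball (0 : EuclideanSpace ℝ (Fin 2)) R,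
      fderiv ℝ w x = fderivWithin ℝ w (closedBall 0 R) x := fun x hx =>
    (fderivWithin_of_mem_nhds (hnhds x hx)).symm
  have hgradnorm : ∀ x, ‖gradient w x‖ = ‖fderiv ℝ w x‖ := fun x =>
    LinearIsometryEquiv.norm_map _ _
  have hcontgrad : ContinuousOn (fun x => ‖gradient w x‖)
      (ball (0 : EuclideanSpace ℝ (Fin 2)) R) := by
    apply ((hfc.mono ball_subset_closedBall).norm).congr
    intro x hx
    show ‖gradient w x‖ = _
    rw [hgradnorm, hfeq x hx]
  have hcontw : ContinuousOn w (ball (0 : EuclideanSpace ℝ (Fin 2)) R) :=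
    hw.continuousOn.mono ball_subset_closedBall
  have hgradM : ∀ x ∈ ball (0 : EuclideanSpace ℝ (Fin 2)) R, ‖gradient w x‖ ≤ M := by
    intro x hx
    rw [hgradnorm, hfeq x hx]
    exact hM x (ball_subset_closedBall hx)
  -- integrability helper
  have hIOn : ∀ (q : EuclideanSpace ℝ (Fin 2) → ℝ) (C : ℝ),
      ContinuousOn q (ball (0 : EuclideanSpace ℝ (Fin 2)) R) →
      (∀ x ∈ ball (0 : EuclideanSpace ℝ (Fin 2)) R, |q x| ≤ C) →
      IntegrableOn q (ball (0 : EuclideanSpace ℝ (Fin 2)) R) := by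
    intro q C hc hb
    exact ⟨hc.aestronglyMeasurable measurableSet_ball,
      HasFiniteIntegral.restrict_of_bounded (C := C) measure_ball_lt_top
        ((ae_restrict_iff' measurableSet_ball).2 (ae_of_all _ hb))⟩
  have hint_grad : IntegrableOn (fun x => ‖gradient w x‖^2)
      (ball (0:EuclideanSpace ℝ (Fin 2)) R) := by
    apply hIOn (fun x => ‖gradient w x‖^2) (M^2) (hcontgrad.pow 2)
    intro x hx
    rw [abs_of_nonneg (by positivity)]
    nlinarith [hgradM x hx, norm_nonneg (gradient w x)]
  have hint_w : IntegrableOn w (ball (0:EuclideanSpace ℝ (Fin 2)) R) := by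
    apply hIOn _ K hcontw
    intro x hx
    have := hK x (ball_subset_closedBall hx)
    rwa [Real.norm_eq_abs] at this
  have hint_w2 : IntegrableOn (fun x => (w x)^2) (ball (0:EuclideanSpace ℝ (Fin 2)) R) := by
    apply hIOn (fun x => (w x)^2) (K^2) (hcontw.pow 2)
    intro x hx
    have := hK x (ball_subset_closedBall hx)
    rw [Real.norm_eq_abs] at this
    rw [abs_of_nonneg (sq_nonneg _)]
    nlinarith [abs_nonneg (w x), sq_abs (w x)]
  have hint_v2 : IntegrableOn (fun x => (w x - μ)^2) (ball (0:EuclideanSpace ℝ (Fin 2)) R) := by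
    apply hIOn (fun x => (w x - μ)^2) ((K+|μ|)^2) ((hcontw.sub continuousOn_const).pow 2)
    intro x hx
    have := hK x (ball_subset_closedBall hx)
    rw [Real.norm_eq_abs] at this
    rw [abs_of_nonneg (sq_nonneg _)]
    nlinarith [abs_nonneg (w x), sq_abs (w x - μ), abs_sub (w x) μ, abs_nonneg (w x - μ),
      abs_nonneg μ, abs_nonneg (w x)]
  have hcontf : ContinuousOn f (ball (0:EuclideanSpace ℝ (Fin 2)) R) :=
    (hcontgrad.pow 2).add (continuousOn_const.mul ((hcontw.sub continuousOn_const).pow 2))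
  set Cf : ℝ := M^2 + ζ*(K+|μ|)^2 with hCfdef
  have hCf0 : 0 ≤ Cf := by positivity
  have hboundf : ∀ x ∈ ball (0:EuclideanSpace ℝ (Fin 2)) R, |f x| ≤ Cf := by
    intro x hx
    have h1 := hgradM x hx
    have h2 := hK x (ball_subset_closedBall hx)
    rw [Real.norm_eq_abs] at h2
    have h3 : |w x - μ| ≤ K + |μ| := (abs_sub _ _).trans (by linarith)
    show |‖gradient w x‖^2 + ζ*(w x - μ)^2| ≤ Cf
    rw [abs_of_nonneg (by positivity)]
    have h4 : (w x - μ)^2 ≤ (K+|μ|)^2 := by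
      nlinarith [sq_abs (w x - μ), abs_nonneg (w x - μ), abs_nonneg μ]
    have h5 : ‖gradient w x‖^2 ≤ M^2 := by nlinarith [norm_nonneg (gradient w x)]
    have h6 : ζ*(w x - μ)^2 ≤ ζ*(K+|μ|)^2 := by nlinarith
    rw [hCfdef]
    linarith
  have hint_f : IntegrableOn f (ball (0:EuclideanSpace ℝ (Fin 2)) R) := hIOn f Cf hcontf hboundf
  -- splitting the integral of f
  have hsplit : ∫ x in ball (0:EuclideanSpace ℝ (Fin 2)) R, f x
      = (∫ x in ball (0:EuclideanSpace ℝ (Fin 2)) R, ‖gradient w x‖^2)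
        + ζ * ∫ x in ball (0:EuclideanSpace ℝ (Fin 2)) R, (w x - μ)^2 := by
    rw [show (∫ x in ball (0:EuclideanSpace ℝ (Fin 2)) R, f x)
        = ∫ x in ball (0:EuclideanSpace ℝ (Fin 2)) R,
            (‖gradient w x‖^2 + ζ*(w x - μ)^2) from rfl,
      integral_add hint_grad (hint_v2.const_mul ζ), integral_const_mul]
  have hvol := vol_ball_E2 R hR
  have hexp : ∫ x in ball (0:EuclideanSpace ℝ (Fin 2)) R, (w x - μ)^2
      = (∫ x in ball (0:EuclideanSpace ℝ (Fin 2)) R, (w x)^2) + μ^2*(Real.pi*R^2) := by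
    have e1 : (fun x => (w x - μ)^2)
        = fun x => (w x)^2 + ((-2*μ) * w x + μ^2) := by funext x; ring
    have hconst : IntegrableOn (fun _ : EuclideanSpace ℝ (Fin 2) => μ^2) (ball 0 R) :=
      integrableOn_const measure_ball_lt_top.ne
    have hg2 : IntegrableOn (fun x => (-2*μ) * w x + μ^2)
        (ball (0:EuclideanSpace ℝ (Fin 2)) R) := (hint_w.const_mul (-2*μ)).add hconst
    have hg3 : IntegrableOn (fun x => (-2*μ) * w x)
        (ball (0:EuclideanSpace ℝ (Fin 2)) R) := hint_w.const_mul (-2*μ)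
    rw [e1, integral_add hint_w2 hg2, integral_add hg3 hconst, integral_const_mul, hmean,
      setIntegral_const]
    rw [smul_eq_mul, measureReal_def, ← hvol]
    ring
  -- change of variables to polar coordinates
  have step1 : ∫ x in ball (0:EuclideanSpace ℝ (Fin 2)) R, f x
      = ∫ x, (Set.indicator (ball (0:EuclideanSpace ℝ (Fin 2)) R) f) x :=
    (integral_indicator measurableSet_ball).symm
  have step2 : ∫ x, (Set.indicator (ball (0:EuclideanSpace ℝ (Fin 2)) R) f) x
      = ∫ p : ℝ×ℝ, (Set.indicator (ball (0:EuclideanSpace ℝ (Fin 2)) R) f) (E2equiv.symm p) :=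
    ((E2equiv_measurePreserving.symm E2equiv).integral_comp
      (MeasurableEquiv.measurableEmbedding _) _).symm
  have step3 : ∫ p : ℝ×ℝ, (Set.indicator (ball (0:EuclideanSpace ℝ (Fin 2)) R) f) (E2equiv.symm p)
      = ∫ p in polarCoord.target,
          p.1 • (Set.indicator (ball (0:EuclideanSpace ℝ (Fin 2)) R) f)
            (E2equiv.symm (polarCoord.symm p)) :=
    (integral_comp_polarCoord_symm
      (fun p => (Set.indicator (ball (0:EuclideanSpace ℝ (Fin 2)) R) f) (E2equiv.symm p))).symm
  have htarget : polarCoord.target = Set.Ioi (0:ℝ) ×ˢ Set.Ioo (-Real.pi) Real.pi := rfl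
  have step4 : ∫ p in polarCoord.target,
        p.1 • (Set.indicator (ball (0:EuclideanSpace ℝ (Fin 2)) R) f)
          (E2equiv.symm (polarCoord.symm p))
      = ∫ p in polarCoord.target,
          (Set.Ioo (0:ℝ) R ×ˢ (Set.univ : Set ℝ)).indicator P p := by
    apply setIntegral_congr_fun (by rw [htarget]; exact measurableSet_Ioi.prod measurableSet_Ioo)
    intro p hp
    rw [htarget] at hp
    have hp1 : 0 < p.1 := hp.1
    have hEs : E2equiv.symm (polarCoord.symm p) = p.1 • U p.2 := by
      show E2equiv.symm (p.1 * Real.cos p.2, p.1 * Real.sin p.2) = _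
      exact E2equiv_smul p.1 (Real.cos p.2, Real.sin p.2)
    have hnrm : ‖p.1 • U p.2‖ = p.1 := by
      rw [norm_smul, hUnorm, mul_one, Real.norm_eq_abs, abs_of_pos hp1]
    show p.1 • (Set.indicator (ball (0:EuclideanSpace ℝ (Fin 2)) R) f)
        (E2equiv.symm (polarCoord.symm p))
      = (Set.Ioo (0:ℝ) R ×ˢ (Set.univ : Set ℝ)).indicator P p
    rw [hEs]
    by_cases hcase : p.1 < R
    · have hm1 : p.1 • U p.2 ∈ ball (0:EuclideanSpace ℝ (Fin 2)) R := by
        rw [mem_ball, dist_zero_right, hnrm]; exact hcase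
      have hm2 : p ∈ Set.Ioo (0:ℝ) R ×ˢ (Set.univ : Set ℝ) :=
        Set.mem_prod.2 ⟨⟨hp1, hcase⟩, Set.mem_univ _⟩
      rw [Set.indicator_of_mem hm1, Set.indicator_of_mem hm2]
      rw [smul_eq_mul]
    · have hm1 : p.1 • U p.2 ∉ ball (0:EuclideanSpace ℝ (Fin 2)) R := by
        rw [mem_ball, dist_zero_right, hnrm]; exact hcase
      have hm2 : p ∉ Set.Ioo (0:ℝ) R ×ˢ (Set.univ : Set ℝ) := fun hmem =>
        hcase (Set.mem_prod.1 hmem).1.2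
      rw [Set.indicator_of_notMem hm1, Set.indicator_of_notMem hm2, smul_zero]
  have step5 : ∫ p in polarCoord.target,
        (Set.Ioo (0:ℝ) R ×ˢ (Set.univ : Set ℝ)).indicator P p
      = ∫ p in S, P p := by
    have hiI : Set.Ioi (0:ℝ) ∩ Set.Ioo 0 R = Set.Ioo 0 R := by
      ext x
      simp only [Set.mem_inter_iff, Set.mem_Ioi, Set.mem_Ioo]
      constructor
      · rintro ⟨h1, h2, h3⟩; exact ⟨h1, h3⟩
      · rintro ⟨h1, h2⟩; exact ⟨h1, h1, h2⟩
    rw [setIntegral_indicator (measurableSet_Ioo.prod MeasurableSet.univ), htarget,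
      Set.prod_inter_prod, Set.inter_univ, hiI]
  -- integrability of P on S
  have hSmeas : MeasurableSet S := measurableSet_Ioo.prod measurableSet_Ioo
  have hcmap : Continuous (fun p : ℝ×ℝ => p.1 • U p.2) := by
    apply continuous_fst.smul
    exact (E2equiv_symm_continuous.comp
      ((Real.continuous_cos.comp continuous_snd).prodMk
        (Real.continuous_sin.comp continuous_snd)))
  have hmaps : ∀ p ∈ S, (p.1 • U p.2) ∈ ball (0:EuclideanSpace ℝ (Fin 2)) R := by
    intro p hp
    have hp1 : 0 < p.1 := hp.1.1
    rw [mem_ball, dist_zero_right, norm_smul, hUnorm, mul_one, Real.norm_eq_abs,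
      abs_of_pos hp1]
    exact hp.1.2
  have hScont : ContinuousOn P S :=
    (continuous_fst.continuousOn).mul (hcontf.comp hcmap.continuousOn hmaps)
  have hSbound : ∀ p ∈ S, ‖P p‖ ≤ R * Cf := by
    intro p hp
    have hp1 : 0 < p.1 := hp.1.1
    have hb := hboundf _ (hmaps p hp)
    rw [Real.norm_eq_abs, hPdef]
    show |p.1 * f (p.1 • U p.2)| ≤ R * Cf
    rw [abs_mul, abs_of_pos hp1]
    exact mul_le_mul hp.1.2.le hb (abs_nonneg _) hR.le
  have hSfin : volume S < ⊤ := by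
    apply Bornology.IsBounded.measure_lt_top
    exact (Metric.isBounded_Ioo _ _).prod (Metric.isBounded_Ioo _ _)
  have hPint : IntegrableOn P S :=
    ⟨hScont.aestronglyMeasurable hSmeas,
      HasFiniteIntegral.restrict_of_bounded (C := R * Cf) hSfin
        ((ae_restrict_iff' hSmeas).2 (ae_of_all _ hSbound))⟩
  -- Fubini
  have hprodmeas : (volume : Measure (ℝ × ℝ)).restrict S
      = ((volume : Measure ℝ).restrict (Set.Ioo 0 R)).prod
          ((volume : Measure ℝ).restrict (Set.Ioo (-Real.pi) Real.pi)) := by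
    have h1 := Measure.prod_restrict (μ := (volume : Measure ℝ)) (ν := (volume : Measure ℝ))
      (Set.Ioo (0:ℝ) R) (Set.Ioo (-Real.pi) Real.pi)
    rw [← Measure.volume_eq_prod] at h1
    exact h1.symm
  have hPint' : Integrable P (((volume : Measure ℝ).restrict (Set.Ioo 0 R)).prod
      ((volume : Measure ℝ).restrict (Set.Ioo (-Real.pi) Real.pi))) := by
    rw [← hprodmeas]
    exact hPint
  have step6 : ∫ p in S, P p
      = ∫ θ in Set.Ioo (-Real.pi) Real.pi, ∫ r in Set.Ioo (0:ℝ) R, P (r, θ) := by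
    rw [show (∫ p in S, P p) = ∫ p, P p ∂((volume : Measure (ℝ × ℝ)).restrict S) from rfl,
      hprodmeas]
    exact integral_prod_symm P hPint'
  have hmarg : Integrable (fun θ => ∫ r in Set.Ioo (0:ℝ) R, P (r, θ))
      ((volume : Measure ℝ).restrict (Set.Ioo (-Real.pi) Real.pi)) :=
    hPint'.integral_prod_right
  -- per-direction ray bound
  have hray : ∀ θ ∈ Set.Ioo (-Real.pi) Real.pi,
      R * (ζ*R/(t*R+2)) * (1-μ)^2 ≤ ∫ r in Set.Ioo (0:ℝ) R, P (r, θ) := by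
    intro θ _
    have hrb := ray_bound R ζ hR hζ w hw hbdry μ (U θ) (hUnorm θ)
    rw [← htdef] at hrb
    exact hrb
  have step7 := setIntegral_ge_of_const_le measurableSet_Ioo
    (by rw [Real.volume_Ioo]; exact ENNReal.ofReal_ne_top) hray hmarg
  have hvolθ : (volume (Set.Ioo (-Real.pi) Real.pi)).toReal = 2*Real.pi := by
    rw [Real.volume_Ioo, ENNReal.toReal_ofReal (by linarith [Real.pi_pos])]
    ring
  -- final algebra
  have htR : t*R ≠ 0 := by positivity
  have htR2 : t*R + 2 ≠ 0 := by positivity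
  have hkeyval : R * (ζ*R/(t*R+2)) * (1-μ)^2 = t*R + 2 := by
    rw [hμdef, hζt]
    field_simp
    ring
  have hμsq : ζ * (μ^2*(Real.pi*R^2)) = 4*Real.pi := by
    rw [hμdef, hζt]
    field_simp
    ring
  have hlow : 2*Real.pi*(t*R+2) ≤ ∫ x in ball (0:EuclideanSpace ℝ (Fin 2)) R, f x := by
    have e1 : (R * (ζ*R/(t*R+2)) * (1-μ)^2) * (volume (Set.Ioo (-Real.pi) Real.pi)).toReal
        = 2*Real.pi*(t*R+2) := by
      rw [hkeyval, hvolθ]; ring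
    calc 2*Real.pi*(t*R+2)
        = (R * (ζ*R/(t*R+2)) * (1-μ)^2) * (volume (Set.Ioo (-Real.pi) Real.pi)).toReal :=
          e1.symm
      _ ≤ ∫ θ in Set.Ioo (-Real.pi) Real.pi, ∫ r in Set.Ioo (0:ℝ) R, P (r, θ) := by
          have h7 := step7
          rw [smul_eq_mul, measureReal_def, mul_comm] at h7
          exact h7
      _ = ∫ x in ball (0:EuclideanSpace ℝ (Fin 2)) R, f x := by
          rw [step1, step2, step3, step4, step5, step6]
  -- conclusion
  have hfinal : ∫ x in ball (0:EuclideanSpace ℝ (Fin 2)) R, f x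
      = (∫ x in ball (0:EuclideanSpace ℝ (Fin 2)) R, ‖gradient w x‖^2)
        + ζ * (∫ x in ball (0:EuclideanSpace ℝ (Fin 2)) R, (w x)^2) + ζ*(μ^2*(Real.pi*R^2)) := by
    rw [hsplit, hexp]
    ring
  rw [hfinal, hμsq] at hlow
  linarith
end
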